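/- arXiv:2412.13036 — 2 statements merged into one kernel-verified Lean document; each statement's English description precedes it below -/
import Mathlib

section
/- Let P and Q be probability measures on a measurable space Ω, let M = (1/2)·P + (1/2)·Q be their midpoint measure, and let ℓ : Ω → ℝ be a measurable function with 0 ≤ ℓ(ω) ≤ C for all ω, where C ≥ 0 is a constant. Then ∫ ℓ dQ ≤ ∫ ℓ dP + (C/√2) · ((KL(Q ‖ M))^{1/2} + (KL(P ‖ M))^{1/2}). -/
open MeasureTheory ProbabilityTheory Real Set
open scoped ENNReal

/-- Kullback–Leibler divergence `KL(P ‖ Q)`: `∫ log (dP/dQ) dP` when `P ≪ Q` (and the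
log-likelihood ratio is integrable), and `+∞` otherwise. -/
noncomputable def klDiv {Ω : Type*} [MeasurableSpace Ω] (P Q : Measure Ω) : ℝ≥0∞ :=
  open Classical in
  if P ≪ Q ∧ Integrable (llr P Q) P then ENNReal.ofReal (∫ ω, llr P Q ω ∂P) else ∞

/-- The midpoint measure `M = (1/2)·P + (1/2)·Q`. -/
noncomputable def midMeasure {Ω : Type*} [MeasurableSpace Ω] (P Q : Measure Ω) : Measure Ω :=
  (2⁻¹ : ℝ≥0∞) • P + (2⁻¹ : ℝ≥0∞) • Q

/-- Jensen–Shannon divergence `D_JS(P ‖ Q) = (1/2)·KL(P ‖ M) + (1/2)·KL(Q ‖ M)` where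
`M` is the midpoint measure. -/
noncomputable def jsDiv {Ω : Type*} [MeasurableSpace Ω] (P Q : Measure Ω) : ℝ≥0∞ :=
  2⁻¹ * klDiv P (midMeasure P Q) + 2⁻¹ * klDiv Q (midMeasure P Q)

private lemma pinsker_fun_deriv2_nonneg {t : ℝ} (ht : 0 < t) :
    0 ≤ 4 * Real.log t + 4 / t - 4 := by
  have h := Real.one_sub_inv_le_log_of_pos ht
  have : (4:ℝ) / t = 4 * t⁻¹ := by ring
  nlinarith [h]

private lemma hasDerivAt_h1 {t : ℝ} (ht : 0 < t) :
    HasDerivAt (fun x : ℝ => 2*(x*Real.log x - x + 1) + 2*(x+2)*Real.log x - 6*(x-1))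
      (4 * Real.log t + 4 / t - 4) t := by
  have h1 : HasDerivAt (fun x : ℝ => x * Real.log x) (Real.log t + 1) t :=
    Real.hasDerivAt_mul_log ht.ne'
  have h2 : HasDerivAt Real.log t⁻¹ t := Real.hasDerivAt_log ht.ne'
  have h3 : HasDerivAt (fun x : ℝ => 2*(x*Real.log x - x + 1) + 2*(x+2)*Real.log x - 6*(x-1))
      (2*((Real.log t + 1) - 1) + ((2*1)*Real.log t + 2*(t+2)*t⁻¹) - 6*1) t := by
    exact ((((h1.sub (hasDerivAt_id t)).add_const 1).const_mul 2).add
      ((((hasDerivAt_id t).add_const 2).const_mul 2).mul h2)).sub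
      (((hasDerivAt_id t).sub_const 1).const_mul 6)
  convert h3 using 1
  field_simp
  ring

private lemma hasDerivAt_h {t : ℝ} (ht : 0 < t) :
    HasDerivAt (fun x : ℝ => 2*(x+2)*(x*Real.log x - x + 1) - 3*(x-1)^2)
      (2*(t*Real.log t - t + 1) + 2*(t+2)*Real.log t - 6*(t-1)) t := by
  have h1 : HasDerivAt (fun x : ℝ => x * Real.log x) (Real.log t + 1) t :=
    Real.hasDerivAt_mul_log ht.ne'
  have h3 : HasDerivAt (fun x : ℝ => 2*(x+2)*(x*Real.log x - x + 1) - 3*(x-1)^2)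
      ((2*1)*(t*Real.log t - t + 1) + 2*(t+2)*((Real.log t + 1) - 1)
        - 3*(2*(t-1)^1*1)) t := by
    exact ((((hasDerivAt_id t).add_const 2).const_mul 2).mul
      (((h1.sub (hasDerivAt_id t)).add_const 1))).sub
      ((((hasDerivAt_id t).sub_const 1).pow 2).const_mul 3)
  convert h3 using 1
  ring

private lemma pinsker_pointwise {t : ℝ} (ht : 0 ≤ t) :
    3 * (t - 1)^2 ≤ 2 * (t + 2) * (t * Real.log t - t + 1) := by
  rcases ht.eq_or_lt with rfl | ht
  · simp [Real.log_zero]; norm_num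
  set h : ℝ → ℝ := fun x => 2*(x+2)*(x*Real.log x - x + 1) - 3*(x-1)^2 with hh
  set h1 : ℝ → ℝ := fun x => 2*(x*Real.log x - x + 1) + 2*(x+2)*Real.log x - 6*(x-1) with hh1
  suffices hs : 0 ≤ h t by simpa [hh] using hs
  have h1mono : MonotoneOn h1 (Ioi 0) := by
    refine monotoneOn_of_deriv_nonneg (convex_Ioi 0) ?_ ?_ ?_
    · intro x hx
      exact (hasDerivAt_h1 hx).continuousAt.continuousWithinAt
    · intro x hx
      rw [interior_Ioi] at hx
      exact (hasDerivAt_h1 hx).differentiableAt.differentiableWithinAt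
    · intro x hx
      rw [interior_Ioi] at hx
      rw [(hasDerivAt_h1 hx).deriv]
      exact pinsker_fun_deriv2_nonneg hx
  have h1one : h1 1 = 0 := by simp [hh1]
  have honev : h 1 = 0 := by simp [hh]
  rcases le_total 1 t with h1t | ht1
  · have hmono : MonotoneOn h (Ici 1) := by
      refine monotoneOn_of_deriv_nonneg (convex_Ici 1) ?_ ?_ ?_
      · intro x hx
        exact (hasDerivAt_h (lt_of_lt_of_le one_pos hx)).continuousAt.continuousWithinAt
      · intro x hx
        rw [interior_Ici] at hx
        exact (hasDerivAt_h (lt_trans one_pos hx)).differentiableAt.differentiableWithinAt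
      · intro x hx
        rw [interior_Ici] at hx
        rw [(hasDerivAt_h (lt_trans one_pos hx)).deriv]
        rw [← h1one]
        exact h1mono (mem_Ioi.2 one_pos) (mem_Ioi.2 (lt_trans one_pos hx)) hx.le
    have := hmono (self_mem_Ici) (mem_Ici.2 h1t) h1t
    rw [honev] at this; exact this
  · have hanti : AntitoneOn h (Ioc 0 1) := by
      refine antitoneOn_of_deriv_nonpos (convex_Ioc 0 1) ?_ ?_ ?_
      · intro x hx
        exact (hasDerivAt_h hx.1).continuousAt.continuousWithinAt
      · intro x hx
        rw [interior_Ioc] at hx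
        exact (hasDerivAt_h hx.1).differentiableAt.differentiableWithinAt
      · intro x hx
        rw [interior_Ioc] at hx
        rw [(hasDerivAt_h hx.1).deriv]
        rw [← h1one]
        exact h1mono (mem_Ioi.2 hx.1) (mem_Ioi.2 one_pos) hx.2.le
    have := hanti (mem_Ioc.2 ⟨ht, ht1⟩) (right_mem_Ioc.2 one_pos) ht1
    rw [honev] at this; exact this

private lemma abs_mul_log_le {t : ℝ} (h0 : 0 ≤ t) (h2 : t ≤ 2) : |t * Real.log t| ≤ 2 := by
  rcases h0.eq_or_lt with rfl | ht
  · simp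
  rcases le_total t 1 with ht1 | h1t
  · have hlog : Real.log t⁻¹ ≤ t⁻¹ - 1 := Real.log_le_sub_one_of_pos (inv_pos.2 ht)
    rw [Real.log_inv] at hlog
    have hnp : t * Real.log t ≤ 0 :=
      mul_nonpos_iff.2 (Or.inl ⟨h0, Real.log_nonpos h0 ht1⟩)
    rw [abs_of_nonpos hnp]
    have htinv : t * t⁻¹ = 1 := mul_inv_cancel₀ ht.ne'
    nlinarith
  · have hlog : Real.log t ≤ t - 1 := Real.log_le_sub_one_of_pos ht
    have hnn : 0 ≤ t * Real.log t := mul_nonneg h0 (Real.log_nonneg h1t)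
    rw [abs_of_nonneg hnn]
    nlinarith [Real.log_nonneg h1t]

private lemma integrable_of_bound {Ω : Type*} [MeasurableSpace Ω] {M : Measure Ω}
    [IsFiniteMeasure M] {F : Ω → ℝ} (hF : Measurable F) (B : ℝ)
    (h : ∀ᵐ ω ∂M, |F ω| ≤ B) : Integrable F M :=
  Integrable.mono' (integrable_const B) hF.aestronglyMeasurable
    (by simpa [Real.norm_eq_abs] using h)

private lemma half_bound {Ω : Type*} [MeasurableSpace Ω] (μ M : Measure Ω)
    [IsProbabilityMeasure μ] [IsProbabilityMeasure M]
    (hμM : μ ≪ M) (hle : μ.rnDeriv M ≤ᵐ[M] 2)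
    (ℓ : Ω → ℝ) (hℓ : Measurable ℓ) (C : ℝ) (hC : 0 ≤ C)
    (hℓ0 : ∀ ω, 0 ≤ ℓ ω) (hℓC : ∀ ω, ℓ ω ≤ C) :
    |∫ ω, ℓ ω ∂μ - ∫ ω, ℓ ω ∂M| ≤
      (C / Real.sqrt 2) * Real.sqrt ((klDiv μ M).toReal) := by
  set g : Ω → ℝ := fun ω => (μ.rnDeriv M ω).toReal with hg
  have hgmeas : Measurable g := (Measure.measurable_rnDeriv μ M).ennreal_toReal
  have hg0 : ∀ ω, 0 ≤ g ω := fun ω => ENNReal.toReal_nonneg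
  have hg2 : ∀ᵐ ω ∂M, g ω ≤ 2 := by
    filter_upwards [hle] with ω hω
    have hω' : μ.rnDeriv M ω ≤ (2:ℝ≥0∞) := hω
    have h2 : ((2:ℝ≥0∞)).toReal = 2 := by simp
    exact h2 ▸ ENNReal.toReal_mono (by simp) hω'
  have hgint : Integrable g M := integrable_of_bound hgmeas 2 <| by
    filter_upwards [hg2] with ω h2'
    rw [abs_of_nonneg (hg0 ω)]; exact h2'
  have hgone : ∫ ω, g ω ∂M = 1 := by
    rw [hg]; rw [Measure.integral_toReal_rnDeriv hμM]; simp
  have hℓμ : ∫ ω, ℓ ω ∂μ = ∫ ω, g ω * ℓ ω ∂M := by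
    rw [← integral_rnDeriv_smul hμM (f := ℓ)]
    simp [smul_eq_mul, hg]
  have hℓM : Integrable ℓ M := integrable_of_bound hℓ C <| .of_forall fun ω => by
    rw [abs_of_nonneg (hℓ0 ω)]; exact hℓC ω
  have hglM : Integrable (fun ω => g ω * ℓ ω) M := integrable_of_bound (hgmeas.mul hℓ) (2*C) <| by
    filter_upwards [hg2] with ω h2'
    rw [abs_mul, abs_of_nonneg (hg0 ω), abs_of_nonneg (hℓ0 ω)]
    exact mul_le_mul h2' (hℓC ω) (hℓ0 ω) (by norm_num)
  have habsint : Integrable (fun ω => |g ω - 1|) M :=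
    integrable_of_bound (hgmeas.sub measurable_const).abs 1 <| by
      filter_upwards [hg2] with ω h2'
      rw [abs_abs]
      rw [abs_le]; constructor <;> [linarith [hg0 ω]; linarith]
  have hsubint : Integrable (fun ω => g ω - 1) M := hgint.sub (integrable_const 1)
  have hdiffint : Integrable (fun ω => g ω * ℓ ω - ℓ ω) M := hglM.sub hℓM
  have hapint : Integrable (fun ω => C * (|g ω - 1| + (g ω - 1)) / 2) M :=
    ((habsint.add hsubint).const_mul C).div_const 2
  have hanint : Integrable (fun ω => -(C * (|g ω - 1| - (g ω - 1)) / 2)) M :=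
    (((habsint.sub hsubint).const_mul C).div_const 2).neg
  have hsub0 : ∫ ω, (g ω - 1) ∂M = 0 := by
    rw [integral_sub hgint (integrable_const 1), hgone]
    simp
  set T := ∫ ω, |g ω - 1| ∂M with hT
  have hT0 : 0 ≤ T := integral_nonneg fun ω => abs_nonneg _
  -- Step A
  have hA : ∫ ω, ℓ ω ∂μ - ∫ ω, ℓ ω ∂M = ∫ ω, ℓ ω * (g ω - 1) ∂M := by
    rw [hℓμ, ← integral_sub hglM hℓM]
    congr 1; funext ω; ring
  -- Step bound by C*T/2
  have hup : ∫ ω, ℓ ω * (g ω - 1) ∂M ≤ C * T / 2 := by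
    have hpt : ∀ ω, ℓ ω * (g ω - 1) ≤ C * (|g ω - 1| + (g ω - 1)) / 2 := by
      intro ω
      rcases abs_cases (g ω - 1) with ⟨he, hs⟩ | ⟨he, hs⟩ <;>
        nlinarith [hℓ0 ω, hℓC ω]
    calc ∫ ω, ℓ ω * (g ω - 1) ∂M
        ≤ ∫ ω, C * (|g ω - 1| + (g ω - 1)) / 2 ∂M := by
          refine integral_mono (hdiffint.congr ?_) hapint hpt
          exact .of_forall fun ω => by ring
      _ = C * T / 2 := by
          rw [integral_div, integral_const_mul, integral_add habsint hsubint, hsub0]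
          rw [← hT]; ring
  have hdown : -(C * T / 2) ≤ ∫ ω, ℓ ω * (g ω - 1) ∂M := by
    have hpt : ∀ ω, -(C * (|g ω - 1| - (g ω - 1)) / 2) ≤ ℓ ω * (g ω - 1) := by
      intro ω
      rcases abs_cases (g ω - 1) with ⟨he, hs⟩ | ⟨he, hs⟩ <;>
        nlinarith [hℓ0 ω, hℓC ω]
    calc -(C * T / 2)
        = ∫ ω, -(C * (|g ω - 1| - (g ω - 1)) / 2) ∂M := by
          rw [integral_neg, integral_div, integral_const_mul,
            integral_sub habsint hsubint, hsub0, ← hT]; ring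
      _ ≤ ∫ ω, ℓ ω * (g ω - 1) ∂M := by
          refine integral_mono hanint (hdiffint.congr ?_) hpt
          exact .of_forall fun ω => by ring
  have habsA : |∫ ω, ℓ ω ∂μ - ∫ ω, ℓ ω ∂M| ≤ C * T / 2 := by
    rw [hA, abs_le]; exact ⟨hdown, hup⟩
  -- KL divergence value
  have hgllog : Integrable (fun ω => g ω * Real.log (g ω)) M :=
    integrable_of_bound (hgmeas.mul (Real.measurable_log.comp hgmeas)) 2 <| by
      filter_upwards [hg2] with ω h2'
      exact abs_mul_log_le (hg0 ω) h2'
  have hillr : Integrable (llr μ M) μ := by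
    rw [← integrable_rnDeriv_smul_iff hμM]
    refine hgllog.congr (.of_forall fun ω => ?_)
    simp [llr_def, smul_eq_mul, hg]
  have hKL : klDiv μ M = ENNReal.ofReal (∫ ω, llr μ M ω ∂μ) := by
    rw [klDiv, if_pos ⟨hμM, hillr⟩]
  have hI : ∫ ω, llr μ M ω ∂μ = ∫ ω, g ω * Real.log (g ω) ∂M := by
    rw [← integral_rnDeriv_smul hμM (f := llr μ M)]
    refine integral_congr_ae (.of_forall fun ω => ?_)
    simp [llr_def, smul_eq_mul, hg]
  set I := ∫ ω, g ω * Real.log (g ω) ∂M with hIdef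
  have hφnonneg : ∀ ω, 0 ≤ g ω * Real.log (g ω) - g ω + 1 := by
    intro ω
    have := pinsker_pointwise (hg0 ω)
    nlinarith [sq_nonneg (g ω - 1), hg0 ω]
  have hglsubint : Integrable (fun ω => g ω * Real.log (g ω) - g ω) M := hgllog.sub hgint
  have hφint : Integrable (fun ω => g ω * Real.log (g ω) - g ω + 1) M :=
    hglsubint.add (integrable_const 1)
  have hφeq : ∫ ω, (g ω * Real.log (g ω) - g ω + 1) ∂M = I := by
    rw [integral_add hglsubint (integrable_const 1),
      integral_sub hgllog hgint, hgone]
    simp [hIdef]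
  have hI0 : 0 ≤ I := by
    rw [← hφeq]; exact integral_nonneg hφnonneg
  have hKLtoReal : (klDiv μ M).toReal = I := by
    rw [hKL, hI, ENNReal.toReal_ofReal hI0]
  -- Pinsker: T ≤ sqrt (2 I)
  have hs : ∀ ω, (0:ℝ) < g ω + 2 := fun ω => by linarith [hg0 ω]
  set u : Ω → ℝ := fun ω => |g ω - 1| / Real.sqrt (g ω + 2) with hu
  set v : Ω → ℝ := fun ω => Real.sqrt (g ω + 2) with hv
  have hvpos : ∀ ω, 0 < v ω := fun ω => Real.sqrt_pos.2 (hs ω)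
  have hvmeas : Measurable v := (hgmeas.add measurable_const).sqrt
  have humeas : Measurable u := (hgmeas.sub measurable_const).abs.div hvmeas
  have hu0 : ∀ ω, 0 ≤ u ω := fun ω => div_nonneg (abs_nonneg _) (hvpos ω).le
  have hv4 : ∀ᵐ ω ∂M, v ω ≤ 2 := by
    filter_upwards [hg2] with ω h2'
    rw [hv]
    calc Real.sqrt (g ω + 2) ≤ Real.sqrt 4 := Real.sqrt_le_sqrt (by linarith)
      _ = 2 := by rw [show (4:ℝ) = 2^2 by norm_num, Real.sqrt_sq (by norm_num : (0:ℝ) ≤ 2)]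
  have hu1 : ∀ᵐ ω ∂M, u ω ≤ 1 := by
    filter_upwards [hg2] with ω h2'
    rw [hu, div_le_one (hvpos ω)]
    have h1v : 1 ≤ v ω := by
      rw [hv, show (1:ℝ) = Real.sqrt 1 by rw [Real.sqrt_one]]
      exact Real.sqrt_le_sqrt (by linarith [hg0 ω])
    have : |g ω - 1| ≤ 1 := by
      rw [abs_le]; constructor <;> [linarith [hg0 ω]; linarith]
    exact this.trans h1v
  have huL2 : MemLp u (ENNReal.ofReal 2) M :=
    MemLp.of_bound humeas.aestronglyMeasurable 1 <| by
      filter_upwards [hu1] with ω h'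
      rw [Real.norm_eq_abs, abs_of_nonneg (hu0 ω)]; exact h'
  have hvL2 : MemLp v (ENNReal.ofReal 2) M :=
    MemLp.of_bound hvmeas.aestronglyMeasurable 2 <| by
      filter_upwards [hv4] with ω h'
      rw [Real.norm_eq_abs, abs_of_nonneg (hvpos ω).le]; exact h'
  have hconj : (2:ℝ).HolderConjugate 2 := Real.HolderConjugate.two_two
  have hCS := integral_mul_le_Lp_mul_Lq_of_nonneg (μ := M) hconj
    (.of_forall hu0) (.of_forall fun ω => (hvpos ω).le) huL2 hvL2
  have huv : ∀ ω, u ω * v ω = |g ω - 1| := by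
    intro ω
    rw [hu, hv, div_mul_cancel₀ _ (Real.sqrt_pos.2 (hs ω)).ne']
  have hu2eq : ∫ ω, u ω ^ (2:ℝ) ∂M = ∫ ω, (g ω - 1)^2 / (g ω + 2) ∂M := by
    refine integral_congr_ae (.of_forall fun ω => ?_)
    show u ω ^ (2:ℝ) = (g ω - 1)^2 / (g ω + 2)
    rw [show u ω ^ (2:ℝ) = u ω ^ (2:ℕ) by rw [← Real.rpow_natCast]; norm_num, hu,
      div_pow, sq_abs, Real.sq_sqrt (hs ω).le]
  have hv2eq : ∫ ω, v ω ^ (2:ℝ) ∂M = 3 := by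
    have : ∫ ω, v ω ^ (2:ℝ) ∂M = ∫ ω, (g ω + 2) ∂M := by
      refine integral_congr_ae (.of_forall fun ω => ?_)
      show v ω ^ (2:ℝ) = g ω + 2
      rw [show v ω ^ (2:ℝ) = v ω ^ (2:ℕ) by rw [← Real.rpow_natCast]; norm_num, hv,
        Real.sq_sqrt (hs ω).le]
    rw [this, integral_add hgint (integrable_const 2), hgone, integral_const]
    simp
    norm_num
  have hwint : Integrable (fun ω => (g ω - 1)^2 / (g ω + 2)) M :=
    integrable_of_bound (((hgmeas.sub measurable_const).pow_const 2).div
      (hgmeas.add measurable_const)) 1 <| by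
        filter_upwards [hg2] with ω h2'
        rw [abs_of_nonneg (div_nonneg (sq_nonneg _) (hs ω).le), div_le_one (hs ω)]
        nlinarith [hg0 ω]
  have hw : ∫ ω, (g ω - 1)^2 / (g ω + 2) ∂M ≤ (2/3) * I := by
    have hpt : ∀ ω, (g ω - 1)^2 / (g ω + 2) ≤ (2/3) * (g ω * Real.log (g ω) - g ω + 1) := by
      intro ω
      rw [div_le_iff₀ (hs ω)]
      nlinarith [pinsker_pointwise (hg0 ω)]
    calc ∫ ω, (g ω - 1)^2 / (g ω + 2) ∂M
        ≤ ∫ ω, (2/3) * (g ω * Real.log (g ω) - g ω + 1) ∂M :=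
          integral_mono hwint (hφint.const_mul _) hpt
      _ = (2/3) * I := by rw [integral_const_mul, hφeq]
  have hTle : T ≤ Real.sqrt (2 * I) := by
    have h1 : T = ∫ ω, u ω * v ω ∂M := by
      rw [hT]; exact integral_congr_ae (.of_forall fun ω => (huv ω).symm)
    have h2' : (∫ ω, u ω ^ (2:ℝ) ∂M) ^ (1/(2:ℝ)) * (∫ ω, v ω ^ (2:ℝ) ∂M) ^ (1/(2:ℝ))
        = Real.sqrt (∫ ω, (g ω - 1)^2 / (g ω + 2) ∂M) * Real.sqrt 3 := by
      rw [hu2eq, hv2eq, ← Real.sqrt_eq_rpow, ← Real.sqrt_eq_rpow]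
    have h3 : Real.sqrt (∫ ω, (g ω - 1)^2 / (g ω + 2) ∂M) * Real.sqrt 3
        ≤ Real.sqrt ((2/3) * I) * Real.sqrt 3 := by
      exact mul_le_mul_of_nonneg_right (Real.sqrt_le_sqrt hw) (Real.sqrt_nonneg 3)
    have h4 : Real.sqrt ((2/3) * I) * Real.sqrt 3 = Real.sqrt (2 * I) := by
      rw [← Real.sqrt_mul (by positivity)]
      congr 1; ring
    calc T = ∫ ω, u ω * v ω ∂M := h1
      _ ≤ _ := hCS
      _ = _ := h2'
      _ ≤ _ := h3
      _ = _ := h4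
  -- Final
  have hfin : C * T / 2 ≤ (C / Real.sqrt 2) * Real.sqrt ((klDiv μ M).toReal) := by
    rw [hKLtoReal]
    have h2I : Real.sqrt (2 * I) = Real.sqrt 2 * Real.sqrt I := Real.sqrt_mul (by norm_num) I
    have hs2 : Real.sqrt 2 * Real.sqrt 2 = 2 := Real.mul_self_sqrt (by norm_num)
    have hs2pos : 0 < Real.sqrt 2 := Real.sqrt_pos.2 (by norm_num)
    have h1 : C * T / 2 ≤ C * (Real.sqrt 2 * Real.sqrt I) / 2 := by
      have := mul_le_mul_of_nonneg_left (h2I ▸ hTle) hC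
      linarith
    have hkey : C / Real.sqrt 2 = C * Real.sqrt 2 / 2 := by
      rw [div_eq_div_iff hs2pos.ne' (by norm_num : (2:ℝ) ≠ 0)]
      linear_combination (-C) * hs2
    have h2 : C * (Real.sqrt 2 * Real.sqrt I) / 2 = (C / Real.sqrt 2) * Real.sqrt I := by
      rw [hkey]; ring
    linarith
  exact habsA.trans hfin

private lemma rnDeriv_le_two {Ω : Type*} [MeasurableSpace Ω] {ν M : Measure Ω}
    [IsFiniteMeasure ν] [IsFiniteMeasure M] (hle : ν ≤ (2:ℝ≥0∞) • M) :
    ν.rnDeriv M ≤ᵐ[M] 2 := by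
  haveI : IsFiniteMeasure ((2:ℝ≥0∞) • M) := by
    constructor
    rw [Measure.smul_apply, smul_eq_mul]
    exact ENNReal.mul_lt_top (by norm_num) (measure_lt_top M univ)
  have h1 : ν.rnDeriv ((2:ℝ≥0∞) • M) ≤ᵐ[(2:ℝ≥0∞) • M] 1 :=
    Measure.rnDeriv_le_one_of_le hle
  rw [Measure.ae_ennreal_smul_measure_eq (by norm_num : (2:ℝ≥0∞) ≠ 0)] at h1
  have h2 := Measure.rnDeriv_smul_right_of_ne_top ν M
    (by norm_num : (2:ℝ≥0∞) ≠ 0) (by norm_num)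
  filter_upwards [h1, h2] with ω h1ω h2ω
  rw [h2ω] at h1ω
  simp only [Pi.smul_apply, smul_eq_mul, Pi.one_apply] at h1ω
  show ν.rnDeriv M ω ≤ (2:ℝ≥0∞)
  calc ν.rnDeriv M ω = 2 * (2⁻¹ * ν.rnDeriv M ω) := by
        rw [← mul_assoc, ENNReal.mul_inv_cancel (by norm_num) (by norm_num), one_mul]
    _ ≤ 2 * 1 := mul_le_mul_right h1ω 2
    _ = 2 := mul_one 2

/-- For probability measures `P, Q` with midpoint `M = (1/2)·P + (1/2)·Q` and a measurable
loss `ℓ` with `0 ≤ ℓ ≤ C`,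
`∫ ℓ dQ ≤ ∫ ℓ dP + (C/√2) · (√(KL(Q ‖ M)) + √(KL(P ‖ M)))`. -/
theorem expected_error_le_add_sqrt_klDiv_midpoint
    {Ω : Type*} [MeasurableSpace Ω] (P Q : Measure Ω)
    [IsProbabilityMeasure P] [IsProbabilityMeasure Q]
    (ℓ : Ω → ℝ) (hℓ : Measurable ℓ) (C : ℝ) (hC : 0 ≤ C)
    (hℓ0 : ∀ ω, 0 ≤ ℓ ω) (hℓC : ∀ ω, ℓ ω ≤ C) :
    ∫ ω, ℓ ω ∂Q ≤ ∫ ω, ℓ ω ∂P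
      + (C / Real.sqrt 2) *
        (Real.sqrt ((klDiv Q (midMeasure P Q)).toReal)
          + Real.sqrt ((klDiv P (midMeasure P Q)).toReal)) := by
  set M := midMeasure P Q with hM
  haveI : IsProbabilityMeasure M := by
    constructor
    rw [hM, midMeasure, Measure.add_apply, Measure.smul_apply, Measure.smul_apply,
      measure_univ, measure_univ]
    simp only [smul_eq_mul, mul_one]
    exact ENNReal.inv_two_add_inv_two
  have h2M : (2:ℝ≥0∞) • M = P + Q := by
    rw [hM, midMeasure, smul_add, smul_smul, smul_smul,
      ENNReal.mul_inv_cancel (by norm_num) (by norm_num), one_smul, one_smul]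
  have hQle : Q ≤ (2:ℝ≥0∞) • M := by rw [h2M]; exact Measure.le_add_left (le_refl Q)
  have hPle : P ≤ (2:ℝ≥0∞) • M := by rw [h2M]; exact Measure.le_add_right (le_refl P)
  have hsmulac : (2:ℝ≥0∞) • M ≪ M := by
    refine Measure.AbsolutelyContinuous.mk fun s _ h0 => ?_
    simp [Measure.smul_apply, h0]
  have hQM : Q ≪ M := (Measure.absolutelyContinuous_of_le hQle).trans hsmulac
  have hPM : P ≪ M := (Measure.absolutelyContinuous_of_le hPle).trans hsmulac
  have hQhalf := half_bound Q M hQM (rnDeriv_le_two hQle) ℓ hℓ C hC hℓ0 hℓC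
  have hPhalf := half_bound P M hPM (rnDeriv_le_two hPle) ℓ hℓ C hC hℓ0 hℓC
  have e1 : ∫ ω, ℓ ω ∂Q - ∫ ω, ℓ ω ∂M
      ≤ (C / Real.sqrt 2) * Real.sqrt ((klDiv Q M).toReal) :=
    (le_abs_self _).trans hQhalf
  have e2 : ∫ ω, ℓ ω ∂M - ∫ ω, ℓ ω ∂P
      ≤ (C / Real.sqrt 2) * Real.sqrt ((klDiv P M).toReal) := by
    have h := (neg_le_abs (∫ ω, ℓ ω ∂P - ∫ ω, ℓ ω ∂M)).trans hPhalf
    linarith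
  rw [mul_add]
  linarith
end

section
/- In the OSHeDA setting, the relabeled source error satisfies Er(P_s^u, f_s) ≤ Er(P_{t,u}, f_t) + √2·C·(D_JS(P_s(Z) ‖ P_{t,u}(Z)))^{1/2}. (An intermediate inequality in the proof of Proposition 1, bounding the source error on the unknown label by the unknown-class target error plus a representation-distance term.) -/
open MeasureTheory ProbabilityTheory Real
open scoped ENNReal

lemma key1 {t : ℝ} (h0 : 0 ≤ t) (h1 : t < 1) :
    2 * t ≤ Real.log (1 + t) - Real.log (1 - t) := by
  set h : ℝ → ℝ := fun s => Real.log (1 + s) - Real.log (1 - s) - 2 * s with hh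
  have hd : ∀ s ∈ Set.Ico (0:ℝ) 1, HasDerivAt h (1/(1+s) + 1/(1-s) - 2) s := by
    intro s hs
    have hs1 : (1:ℝ) + s ≠ 0 := by nlinarith [hs.1]
    have hs2 : (1:ℝ) - s ≠ 0 := by nlinarith [hs.2]
    have d1 : HasDerivAt (fun x : ℝ => Real.log (1 + x)) (1/(1+s)) s := by
      simpa using (((hasDerivAt_id s).const_add 1).log hs1)
    have d2 : HasDerivAt (fun x : ℝ => Real.log (1 - x)) (-(1/(1-s))) s := by
      have h' : HasDerivAt (fun x : ℝ => (1:ℝ) - x) (-1) s := by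
        simpa using ((hasDerivAt_id s).const_sub 1)
      have := h'.log hs2
      convert this using 1
      field_simp
    have d3 : HasDerivAt (fun x : ℝ => 2 * x) 2 s := by
      simpa using (hasDerivAt_id s).const_mul 2
    have := (d1.sub d2).sub d3
    refine this.congr_deriv ?_
    ring
  have hmono : MonotoneOn h (Set.Ico (0:ℝ) 1) := by
    apply monotoneOn_of_deriv_nonneg (convex_Ico 0 1)
    · intro s hs
      exact (hd s hs).continuousAt.continuousWithinAt
    · intro s hs
      rw [interior_Ico] at hs
      exact ((hd s ⟨le_of_lt hs.1, hs.2⟩).differentiableAt.differentiableWithinAt)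
    · intro s hs
      rw [interior_Ico] at hs
      rw [(hd s ⟨le_of_lt hs.1, hs.2⟩).deriv]
      have hs1 : (0:ℝ) < 1 + s := by linarith [hs.1]
      have hs2 : (0:ℝ) < 1 - s := by linarith [hs.2]
      rw [div_add_div _ _ (ne_of_gt hs1) (ne_of_gt hs2), sub_nonneg, le_div_iff₀ (by positivity)]
      nlinarith [sq_nonneg s]
  have := hmono (Set.mem_Ico.2 ⟨le_rfl, one_pos⟩) (Set.mem_Ico.2 ⟨h0, h1⟩) h0
  simp only [hh, Real.log_one] at this
  simp only [add_zero, sub_zero, mul_zero] at this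
  linarith [this]

lemma key2 {t : ℝ} (h0 : 0 ≤ t) (h1 : t ≤ 1) :
    t ^ 2 ≤ (1 + t) * Real.log (1 + t) + (1 - t) * Real.log (1 - t) := by
  rcases eq_or_lt_of_le h1 with rfl | h1
  · norm_num
    nlinarith [Real.log_two_gt_d9]
  set g : ℝ → ℝ := fun s => (1 + s) * Real.log (1 + s) + (1 - s) * Real.log (1 - s) - s ^ 2
    with hg
  have hd : ∀ s ∈ Set.Ico (0:ℝ) 1,
      HasDerivAt g (Real.log (1 + s) - Real.log (1 - s) - 2 * s) s := by
    intro s hs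
    have hs1 : (1:ℝ) + s ≠ 0 := by nlinarith [hs.1]
    have hs2 : (1:ℝ) - s ≠ 0 := by nlinarith [hs.2]
    have da : HasDerivAt (fun x : ℝ => (1:ℝ) + x) 1 s := by
      simpa using (hasDerivAt_id s).const_add 1
    have db : HasDerivAt (fun x : ℝ => (1:ℝ) - x) (-1) s := by
      simpa using (hasDerivAt_id s).const_sub 1
    have d1 : HasDerivAt (fun x : ℝ => (1 + x) * Real.log (1 + x))
        (1 * Real.log (1 + s) + (1 + s) * (1 / (1 + s))) s := da.mul (da.log hs1)
    have d2 : HasDerivAt (fun x : ℝ => (1 - x) * Real.log (1 - x))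
        ((-1) * Real.log (1 - s) + (1 - s) * (-1 / (1 - s))) s := db.mul (db.log hs2)
    have d3 : HasDerivAt (fun x : ℝ => x ^ 2) (2 * s) s := by
      simpa using hasDerivAt_pow 2 s
    have := (d1.add d2).sub d3
    refine this.congr_deriv ?_
    field_simp
    ring
  have hmono : MonotoneOn g (Set.Ico (0:ℝ) 1) := by
    apply monotoneOn_of_deriv_nonneg (convex_Ico 0 1)
    · intro s hs
      exact (hd s hs).continuousAt.continuousWithinAt
    · intro s hs
      rw [interior_Ico] at hs
      exact ((hd s ⟨le_of_lt hs.1, hs.2⟩).differentiableAt.differentiableWithinAt)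
    · intro s hs
      rw [interior_Ico] at hs
      rw [(hd s ⟨le_of_lt hs.1, hs.2⟩).deriv]
      have := key1 (le_of_lt hs.1) hs.2
      linarith
  have := hmono (Set.mem_Ico.2 ⟨le_rfl, one_pos⟩) (Set.mem_Ico.2 ⟨h0, h1⟩) h0
  simp only [hg, Real.log_one] at this
  norm_num at this
  linarith [this]

lemma key3 {x : ℝ} (h0 : 0 ≤ x) (h2 : x ≤ 2) :
    (x - 1) ^ 2 ≤ x * Real.log x + (2 - x) * Real.log (2 - x) := by
  rcases le_total 1 x with hx | hx
  · have := key2 (t := x - 1) (by linarith) (by linarith)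
    have e1 : 1 + (x - 1) = x := by ring
    have e2 : 1 - (x - 1) = 2 - x := by ring
    rw [e1, e2] at this
    linarith
  · have := key2 (t := 1 - x) (by linarith) (by linarith)
    have e1 : 1 + (1 - x) = 2 - x := by ring
    have e2 : 1 - (1 - x) = x := by ring
    rw [e1, e2] at this
    nlinarith [this]

lemma key4 {x : ℝ} (h0 : 0 ≤ x) (h2 : x ≤ 2) : |x * Real.log x| ≤ 2 := by
  rcases eq_or_lt_of_le h0 with rfl | hx
  · simp
  rw [abs_le]
  constructor
  · have hlog : Real.log x⁻¹ ≤ x⁻¹ - 1 := Real.log_le_sub_one_of_pos (by positivity)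
    have : x * Real.log x⁻¹ ≤ x * (x⁻¹ - 1) := by
      exact mul_le_mul_of_nonneg_left hlog (le_of_lt hx)
    rw [Real.log_inv] at this
    have hxi : x * (x⁻¹ - 1) = 1 - x := by field_simp
    nlinarith [this]
  · have hlog : Real.log x ≤ x - 1 := Real.log_le_sub_one_of_pos hx
    nlinarith [mul_le_mul_of_nonneg_left hlog (le_of_lt hx)]

lemma integrable_of_ae_bound {α : Type*} [MeasurableSpace α] {μ : Measure α}
    [IsFiniteMeasure μ] {f : α → ℝ} (hf : AEStronglyMeasurable f μ) {C : ℝ}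
    (h : ∀ᵐ x ∂μ, |f x| ≤ C) : Integrable f μ :=
  memLp_one_iff_integrable.mp (MemLp.of_bound hf C (by simpa [Real.norm_eq_abs] using h))

lemma core_bound {Z : Type*} [MeasurableSpace Z] (P Q : Measure Z)
    [IsProbabilityMeasure P] [IsProbabilityMeasure Q]
    (u : Z → ℝ) (hu : Measurable u) (C : ℝ) (hC : 0 ≤ C)
    (h0 : ∀ z, 0 ≤ u z) (h1 : ∀ z, u z ≤ C) :
    ∫ z, u z ∂P - ∫ z, u z ∂Q ≤ Real.sqrt 2 * C * Real.sqrt ((jsDiv P Q).toReal) := by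
  set M : Measure Z := midMeasure P Q with hM
  have hMapp : ∀ s : Set Z, M s = 2⁻¹ * P s + 2⁻¹ * Q s := by
    intro s; simp [hM, midMeasure]
  have hMuniv : M Set.univ = 1 := by
    rw [hMapp]; simp [measure_univ]
    rw [ENNReal.inv_two_add_inv_two]
  haveI : IsProbabilityMeasure M := ⟨hMuniv⟩
  have hPM : P ≪ M := by
    refine Measure.AbsolutelyContinuous.mk fun s hs h => ?_
    rw [hMapp] at h
    simpa using (add_eq_zero.mp h).1
  have hQM : Q ≪ M := by
    refine Measure.AbsolutelyContinuous.mk fun s hs h => ?_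
    rw [hMapp] at h
    simpa using (add_eq_zero.mp h).2
  set F : Z → ℝ := fun z => (P.rnDeriv M z).toReal with hF
  set G : Z → ℝ := fun z => (Q.rnDeriv M z).toReal with hG
  have hFmeas : Measurable F := (Measure.measurable_rnDeriv P M).ennreal_toReal
  have hGmeas : Measurable G := (Measure.measurable_rnDeriv Q M).ennreal_toReal
  -- a.e. facts
  have h2M : P + Q = (2 : ℝ≥0∞) • M := by
    rw [hM, midMeasure, smul_add, smul_smul, smul_smul,
      ENNReal.mul_inv_cancel (by norm_num) (by norm_num), one_smul, one_smul]
  have hadd : (fun z => P.rnDeriv M z + Q.rnDeriv M z) =ᵐ[M] fun _ => (2 : ℝ≥0∞) := by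
    have e1 := (Measure.rnDeriv_add P Q M).symm
    have e2 : ((P + Q).rnDeriv M) =ᵐ[M] (((2 : ℝ≥0∞) • M).rnDeriv M) := by rw [h2M]
    have e3 := Measure.rnDeriv_smul_left_of_ne_top M M (r := 2) (by norm_num)
    have e4 := Measure.rnDeriv_self M
    filter_upwards [e1, e2, e3, e4] with z z1 z2 z3 z4
    have : P.rnDeriv M z + Q.rnDeriv M z = (P.rnDeriv M + Q.rnDeriv M) z := rfl
    rw [this, z1, z2, z3]
    simp [z4]
  have hae : ∀ᵐ z ∂M, F z + G z = 2 ∧ 0 ≤ F z ∧ F z ≤ 2 ∧ 0 ≤ G z ∧ G z ≤ 2 := by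
    filter_upwards [hadd, Measure.rnDeriv_lt_top P M, Measure.rnDeriv_lt_top Q M]
      with z hz hP hQ
    have hsum : F z + G z = 2 := by
      rw [hF, hG, ← ENNReal.toReal_add hP.ne hQ.ne, hz]
      simp
    have hF0 : 0 ≤ F z := ENNReal.toReal_nonneg
    have hG0 : 0 ≤ G z := ENNReal.toReal_nonneg
    exact ⟨hsum, hF0, by linarith, hG0, by linarith⟩
  -- change of measure for integrals
  have hIP : ∀ (f : Z → ℝ), ∫ z, F z * f z ∂M = ∫ z, f z ∂P := by
    intro f
    simpa [smul_eq_mul] using integral_rnDeriv_smul hPM (f := f)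
  have hIQ : ∀ (f : Z → ℝ), ∫ z, G z * f z ∂M = ∫ z, f z ∂Q := by
    intro f
    simpa [smul_eq_mul] using integral_rnDeriv_smul hQM (f := f)
  have hFint : ∫ z, F z ∂M = 1 := by
    rw [hF, Measure.integral_toReal_rnDeriv hPM]; simp
  have hGint : ∫ z, G z ∂M = 1 := by
    rw [hG, Measure.integral_toReal_rnDeriv hQM]; simp
  -- integrability helpers
  have hbF : Integrable F M := integrable_of_ae_bound hFmeas.aestronglyMeasurable (C := 2)
    (by filter_upwards [hae] with z hz; rw [abs_le]; constructor <;> linarith [hz.2.1, hz.2.2.1])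
  have hbG : Integrable G M := integrable_of_ae_bound hGmeas.aestronglyMeasurable (C := 2)
    (by filter_upwards [hae] with z hz;
        rw [abs_le]; constructor <;> linarith [hz.2.2.2.1, hz.2.2.2.2])
  have hbFu : Integrable (fun z => F z * u z) M := by
    refine integrable_of_ae_bound (hFmeas.mul hu).aestronglyMeasurable (C := 2 * C) ?_
    filter_upwards [hae] with z hz
    rw [abs_mul]
    have := h0 z; have := h1 z
    have habs : |F z| ≤ 2 := by rw [abs_le]; constructor <;> linarith [hz.2.1, hz.2.2.1]
    have : |u z| ≤ C := by rw [abs_le]; constructor <;> linarith [h0 z, h1 z]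
    exact mul_le_mul habs this (abs_nonneg _) (by norm_num)
  have hbGu : Integrable (fun z => G z * u z) M := by
    refine integrable_of_ae_bound (hGmeas.mul hu).aestronglyMeasurable (C := 2 * C) ?_
    filter_upwards [hae] with z hz
    rw [abs_mul]
    have habs : |G z| ≤ 2 := by
      rw [abs_le]; constructor <;> linarith [hz.2.2.2.1, hz.2.2.2.2]
    have : |u z| ≤ C := by rw [abs_le]; constructor <;> linarith [h0 z, h1 z]
    exact mul_le_mul habs this (abs_nonneg _) (by norm_num)
  have hbFG1 : Integrable (fun z => |F z - 1|) M := (hbF.sub (integrable_const 1)).abs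
  -- Step 1 : difference of integrals ≤ C * ∫ |F - 1|
  have step1 : ∫ z, u z ∂P - ∫ z, u z ∂Q ≤ C * ∫ z, |F z - 1| ∂M := by
    set W : Z → ℝ := fun z => (F z - G z) * (u z - C / 2) with hW
    have hintFG : Integrable (fun z => F z - G z) M := hbF.sub hbG
    have hbW : Integrable W M := by
      refine integrable_of_ae_bound
        (((hFmeas.sub hGmeas).mul (hu.sub measurable_const))).aestronglyMeasurable
        (C := 2 * C) ?_
      filter_upwards [hae] with z hz
      rw [abs_mul]
      have habs : |F z - G z| ≤ 2 := by
        rw [abs_le]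
        constructor <;> linarith [hz.2.1, hz.2.2.1, hz.2.2.2.1, hz.2.2.2.2]
      have huz : |u z - C / 2| ≤ C := by
        rw [abs_le]; constructor <;> [linarith [h0 z, hC]; linarith [h1 z, hC]]
      exact mul_le_mul habs huz (abs_nonneg _) (by norm_num)
    have e1 : ∫ z, W z ∂M = ∫ z, u z ∂P - ∫ z, u z ∂Q := by
      calc ∫ z, W z ∂M
          = ∫ z, (F z * u z - G z * u z) - C / 2 * (F z - G z) ∂M := by
            apply integral_congr_ae
            filter_upwards with z
            simp only [hW]
            ring
        _ = (∫ z, F z * u z - G z * u z ∂M) - ∫ z, C / 2 * (F z - G z) ∂M :=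
            integral_sub (hbFu.sub hbGu) (hintFG.const_mul _)
        _ = (∫ z, F z * u z ∂M - ∫ z, G z * u z ∂M) - C / 2 * ∫ z, F z - G z ∂M := by
            rw [integral_sub hbFu hbGu, integral_const_mul]
        _ = ∫ z, u z ∂P - ∫ z, u z ∂Q := by
            rw [hIP u, hIQ u, integral_sub hbF hbG, hFint, hGint]
            ring
    have e2 : ∫ z, W z ∂M ≤ ∫ z, |F z - 1| * C ∂M := by
      refine integral_mono_ae hbW (hbFG1.mul_const C) ?_
      filter_upwards [hae] with z hz
      have hGz : G z = 2 - F z := by linarith [hz.1]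
      have hfg : F z - G z = 2 * (F z - 1) := by rw [hGz]; ring
      have huz : |u z - C / 2| ≤ C / 2 := by
        rw [abs_le]; constructor <;> [linarith [h0 z]; linarith [h1 z]]
      calc W z ≤ |W z| := le_abs_self _
        _ = |F z - G z| * |u z - C / 2| := abs_mul _ _
        _ ≤ |F z - G z| * (C / 2) := mul_le_mul_of_nonneg_left huz (abs_nonneg _)
        _ = |F z - 1| * C := by
            rw [hfg, abs_mul]
            rw [abs_of_nonneg (by norm_num : (0:ℝ) ≤ 2)]
            ring
    calc ∫ z, u z ∂P - ∫ z, u z ∂Q = ∫ z, W z ∂M := e1.symm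
      _ ≤ ∫ z, |F z - 1| * C ∂M := e2
      _ = C * ∫ z, |F z - 1| ∂M := by rw [integral_mul_const]; ring
  -- Step 2 : Cauchy–Schwarz : ∫|F-1| ≤ sqrt (∫ (F-1)^2)
  have hX2 : MemLp (fun z => |F z - 1|) 2 M := by
    refine MemLp.of_bound ((hFmeas.sub measurable_const).abs).aestronglyMeasurable 1 ?_
    filter_upwards [hae] with z hz
    rw [Real.norm_eq_abs, abs_abs, abs_le]
    constructor <;> linarith [hz.2.1, hz.2.2.1]
  have step2 : ∫ z, |F z - 1| ∂M ≤ Real.sqrt (∫ z, (F z - 1) ^ 2 ∂M) := by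
    have hvar := variance_nonneg (fun z => |F z - 1|) M
    rw [variance_eq_sub hX2] at hvar
    have hsq : (∫ z, |F z - 1| ∂M) ^ 2 ≤ ∫ z, (F z - 1) ^ 2 ∂M := by
      have : M[(fun z => |F z - 1|) ^ 2] = ∫ z, (F z - 1) ^ 2 ∂M := by
        apply integral_congr_ae
        filter_upwards with z
        simp [sq_abs]
      rw [this] at hvar
      linarith
    calc ∫ z, |F z - 1| ∂M = Real.sqrt ((∫ z, |F z - 1| ∂M) ^ 2) := by
          rw [Real.sqrt_sq (integral_nonneg fun z => abs_nonneg _)]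
      _ ≤ Real.sqrt (∫ z, (F z - 1) ^ 2 ∂M) := Real.sqrt_le_sqrt hsq
  -- Step 3 : ∫ (F-1)^2 ≤ 2 * (jsDiv P Q).toReal
  have hllrPmul : (fun z => F z • llr P M z) = fun z => F z * Real.log (F z) := by
    funext z; rw [smul_eq_mul, llr_def]
  have hllrQmul : (fun z => G z • llr Q M z) = fun z => G z * Real.log (G z) := by
    funext z; rw [smul_eq_mul, llr_def]
  have hbFlog : Integrable (fun z => F z * Real.log (F z)) M := by
    refine integrable_of_ae_bound
      (hFmeas.mul (Real.measurable_log.comp hFmeas)).aestronglyMeasurable (C := 2) ?_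
    filter_upwards [hae] with z hz
    exact key4 hz.2.1 hz.2.2.1
  have hbGlog : Integrable (fun z => G z * Real.log (G z)) M := by
    refine integrable_of_ae_bound
      (hGmeas.mul (Real.measurable_log.comp hGmeas)).aestronglyMeasurable (C := 2) ?_
    filter_upwards [hae] with z hz
    exact key4 hz.2.2.2.1 hz.2.2.2.2
  have hllrP : Integrable (llr P M) P := by
    rw [← integrable_rnDeriv_smul_iff hPM]
    convert hbFlog using 1
  have hllrQ : Integrable (llr Q M) Q := by
    rw [← integrable_rnDeriv_smul_iff hQM]
    convert hbGlog using 1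
  set A : ℝ := ∫ z, llr P M z ∂P with hA
  set B : ℝ := ∫ z, llr Q M z ∂Q with hB
  have hAeq : ∫ z, F z * Real.log (F z) ∂M = A := by
    rw [hA, ← integral_rnDeriv_smul hPM, ← hllrPmul]
  have hBeq : ∫ z, G z * Real.log (G z) ∂M = B := by
    rw [hB, ← integral_rnDeriv_smul hQM, ← hllrQmul]
  have hklP : klDiv P M = ENNReal.ofReal A := if_pos ⟨hPM, hllrP⟩
  have hklQ : klDiv Q M = ENNReal.ofReal B := if_pos ⟨hQM, hllrQ⟩
  have hjs : A + B ≤ 2 * (jsDiv P Q).toReal := by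
    have hfin : jsDiv P Q = 2⁻¹ * ENNReal.ofReal A + 2⁻¹ * ENNReal.ofReal B := by
      rw [jsDiv, ← hM, hklP, hklQ]
    have htoA : A ≤ (ENNReal.ofReal A).toReal := by
      rcases le_total 0 A with h | h
      · rw [ENNReal.toReal_ofReal h]
      · exact le_trans h ENNReal.toReal_nonneg
    have htoB : B ≤ (ENNReal.ofReal B).toReal := by
      rcases le_total 0 B with h | h
      · rw [ENNReal.toReal_ofReal h]
      · exact le_trans h ENNReal.toReal_nonneg
    have : (jsDiv P Q).toReal
        = 2⁻¹ * (ENNReal.ofReal A).toReal + 2⁻¹ * (ENNReal.ofReal B).toReal := by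
      rw [hfin, ENNReal.toReal_add (by finiteness) (by finiteness),
        ENNReal.toReal_mul, ENNReal.toReal_mul]
      norm_num
    rw [this]; linarith
  have step3 : ∫ z, (F z - 1) ^ 2 ∂M ≤ 2 * (jsDiv P Q).toReal := by
    have hmono : ∫ z, (F z - 1) ^ 2 ∂M
        ≤ ∫ z, (F z * Real.log (F z) + G z * Real.log (G z)) ∂M := by
      refine integral_mono_ae ?_ (hbFlog.add hbGlog) ?_
      · refine integrable_of_ae_bound
          ((hFmeas.sub measurable_const).pow_const 2).aestronglyMeasurable (C := 1) ?_
        filter_upwards [hae] with z hz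
        rw [abs_of_nonneg (sq_nonneg _), sq_le_one_iff_abs_le_one, abs_le]
        constructor <;> linarith [hz.2.1, hz.2.2.1]
      · filter_upwards [hae] with z hz
        have hGz : G z = 2 - F z := by linarith [hz.1]
        rw [hGz]
        exact key3 hz.2.1 hz.2.2.1
    rw [integral_add hbFlog hbGlog, hAeq, hBeq] at hmono
    linarith
  -- Combine
  have hT0 : 0 ≤ ∫ z, |F z - 1| ∂M := integral_nonneg fun z => abs_nonneg _
  calc ∫ z, u z ∂P - ∫ z, u z ∂Q ≤ C * ∫ z, |F z - 1| ∂M := step1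
    _ ≤ C * Real.sqrt (∫ z, (F z - 1) ^ 2 ∂M) := by
        exact mul_le_mul_of_nonneg_left step2 hC
    _ ≤ C * Real.sqrt (2 * (jsDiv P Q).toReal) := by
        exact mul_le_mul_of_nonneg_left (Real.sqrt_le_sqrt step3) hC
    _ = Real.sqrt 2 * C * Real.sqrt ((jsDiv P Q).toReal) := by
        rw [Real.sqrt_mul (by norm_num)]
        ring


/-- Intermediate inequality in the proof of Proposition 1: the relabeled source error is
bounded by the unknown-class target error plus a representation-distance term. -/
theorem osheda_relabel_source_error_upper_bound
    {Xs Xt Z Y : Type*} [MeasurableSpace Xs] [MeasurableSpace Xt]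
    [MeasurableSpace Z] [MeasurableSpace Y]
    (K : Set Y) (hK : MeasurableSet K) (unk : Y) (hunk : unk ∉ K)
    (Ps : Measure (Xs × Y)) (Pt : Measure (Xt × Y))
    [IsProbabilityMeasure Ps] [IsProbabilityMeasure Pt]
    (fs : Xs → Z) (ft : Xt → Z) (hfs : Measurable fs) (hft : Measurable ft)
    (ℓ : Z × Y → ℝ) (hℓ : Measurable ℓ) (C : ℝ) (hC : 0 ≤ C)
    (hℓ0 : ∀ z y, 0 ≤ ℓ (z, y)) (hℓC : ∀ z y, ℓ (z, y) ≤ C)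
    (lam : ℝ) (hlam : lam = (Pt {p | p.2 ∈ K}).toReal)
    (hlam0 : 0 < lam) (hlam1 : lam < 1)
    (hsrc : Ps {p | p.2 ∉ K} = 0)
    (htgt : Pt {p | p.2 ∉ K ∧ p.2 ≠ unk} = 0) :
    ∫ p, ℓ (fs p.1, unk) ∂Ps ≤
      ∫ p, ℓ (ft p.1, p.2) ∂(Pt[|{p | p.2 ∉ K}])
      + Real.sqrt 2 * C *
          Real.sqrt ((jsDiv (Ps.map (fun p => fs p.1))
            ((Pt[|{p | p.2 ∉ K}]).map (fun p => ft p.1))).toReal) := by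
  have hEmeas : MeasurableSet {p : Xt × Y | p.2 ∉ K} :=
    (hK.preimage measurable_snd).compl
  have hEne : Pt {p : Xt × Y | p.2 ∉ K} ≠ 0 := by
    intro h
    have hcompl : ({p : Xt × Y | p.2 ∉ K} : Set (Xt × Y))ᶜ = {p : Xt × Y | p.2 ∈ K} := by
      ext p; simp
    have h1 : Pt {p : Xt × Y | p.2 ∈ K} = 1 := by
      rw [← hcompl, prob_compl_eq_one_sub hEmeas, h]
      simp
    rw [hlam, h1] at hlam1
    simp at hlam1
  haveI : IsProbabilityMeasure (Pt[|{p : Xt × Y | p.2 ∉ K}]) :=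
    cond_isProbabilityMeasure hEne
  set u : Z → ℝ := fun z => ℓ (z, unk) with hu_def
  have hu : Measurable u := hℓ.comp (measurable_id.prodMk measurable_const)
  set P : Measure Z := Ps.map (fun p => fs p.1) with hP
  set Q : Measure Z := (Pt[|{p : Xt × Y | p.2 ∉ K}]).map (fun p => ft p.1) with hQ
  haveI : IsProbabilityMeasure P :=
    Measure.isProbabilityMeasure_map ((show Measurable fun p : Xs × Y => fs p.1 from hfs.comp measurable_fst).aemeasurable)
  haveI : IsProbabilityMeasure Q :=
    Measure.isProbabilityMeasure_map ((show Measurable fun p : Xt × Y => ft p.1 from hft.comp measurable_fst).aemeasurable)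
  have hLHS : ∫ p, ℓ (fs p.1, unk) ∂Ps = ∫ z, u z ∂P := by
    rw [hP, integral_map ((show Measurable fun p : Xs × Y => fs p.1 from hfs.comp measurable_fst).aemeasurable) hu.aestronglyMeasurable]
  have hRHS : ∫ p, ℓ (ft p.1, p.2) ∂(Pt[|{p : Xt × Y | p.2 ∉ K}]) = ∫ z, u z ∂Q := by
    have hnull : (Pt[|{p : Xt × Y | p.2 ∉ K}]) {p : Xt × Y | p.2 ≠ unk} = 0 := by
      rw [cond_apply hEmeas]
      have hset : {p : Xt × Y | p.2 ∉ K} ∩ {p : Xt × Y | p.2 ≠ unk}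
          = {p : Xt × Y | p.2 ∉ K ∧ p.2 ≠ unk} := by
        ext p; simp [Set.mem_inter_iff]
      rw [hset, htgt, mul_zero]
    have hae2 : ∀ᵐ p ∂(Pt[|{p : Xt × Y | p.2 ∉ K}]), p.2 = unk := by
      rw [ae_iff]
      exact hnull
    have e1 : ∫ p, ℓ (ft p.1, p.2) ∂(Pt[|{p : Xt × Y | p.2 ∉ K}])
        = ∫ p, u (ft p.1) ∂(Pt[|{p : Xt × Y | p.2 ∉ K}]) := by
      apply integral_congr_ae
      filter_upwards [hae2] with p hp
      rw [hu_def, hp]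
    rw [e1, hQ,
      integral_map ((show Measurable fun p : Xt × Y => ft p.1 from hft.comp measurable_fst).aemeasurable) hu.aestronglyMeasurable]
  have hcore := core_bound P Q u hu C hC (fun z => hℓ0 z unk) (fun z => hℓC z unk)
  rw [hLHS, hRHS]
  linarith
end
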